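/- arXiv:1705.07298 — 3 statements merged into one kernel-verified Lean document; each statement's English description precedes it below -/
import Mathlib

section
/- Let ω > 0 and let x : ℝ → ℂ be a measurable function with ∫_ℝ |x(ξ)| e^{−ω|ξ|} dξ < ∞. If t ∈ ℝ is a Lebesgue point of x (i.e. (1/(2ε)) ∫_{t−ε}^{t+ε} |x(τ) − x(t)| dτ → 0 as ε → 0⁺) and x(t) ≠ 0, then ∫_ℝ |S_ω(t − τ) x(τ)| dτ = ∞. -/
open MeasureTheory Filter Set

open scoped ENNReal NNReal

lemma sinh_le_mul_cosh {u : ℝ} (hu : 0 ≤ u) : Real.sinh u ≤ u * Real.cosh u := by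
  have h : MonotoneOn (fun u : ℝ => u * Real.cosh u - Real.sinh u) (Set.Ici 0) := by
    apply monotoneOn_of_deriv_nonneg (convex_Ici 0)
    · exact ((continuous_id.mul Real.continuous_cosh).sub Real.continuous_sinh).continuousOn
    · intro y _
      exact (((differentiable_id.mul Real.differentiable_cosh).sub
        Real.differentiable_sinh) y).differentiableWithinAt
    · intro y hy
      have hd : HasDerivAt (fun u : ℝ => u * Real.cosh u - Real.sinh u)
          (1 * Real.cosh y + y * Real.sinh y - Real.cosh y) y :=
        ((hasDerivAt_id y).mul (Real.hasDerivAt_cosh y)).sub (Real.hasDerivAt_sinh y)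
      rw [hd.deriv]
      have hy' : 0 < y := by simpa using hy
      nlinarith [Real.sinh_pos_iff.mpr hy']
  have h0 := h Set.self_mem_Ici hu hu
  simp only [Real.sinh_zero, Real.cosh_zero, zero_mul, sub_zero, sub_self] at h0
  linarith

/-- The kernel `S_ω(ξ) = (ω/π) · (1/sinh(ωξ))`. -/
noncomputable def Sker (ω ξ : ℝ) : ℝ := (ω / Real.pi) * (1 / Real.sinh (ω * ξ))

/-- If `x` is measurable with `∫ |x(ξ)| e^{-ω|ξ|} dξ < ∞`, `t` is a Lebesgue point of `x`
and `x t ≠ 0`, then `∫ |S_ω(t-τ) x(τ)| dτ = ∞`. -/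
theorem stmt2 (ω : ℝ) (hω : 0 < ω) (x : ℝ → ℂ) (hmx : Measurable x)
    (hx : Integrable (fun ξ : ℝ => ‖x ξ‖ * Real.exp (-ω * |ξ|)))
    (t : ℝ)
    (hLeb : Tendsto (fun ε : ℝ => (1 / (2 * ε)) * ∫ τ in (t - ε)..(t + ε), ‖x τ - x t‖)
      (nhdsWithin 0 (Set.Ioi 0)) (nhds 0))
    (hxt : x t ≠ 0) :
    ∫⁻ τ : ℝ, ‖(Sker ω (t - τ) : ℂ) * x τ‖₊ = ⊤ := by
  set c : ℝ := ‖x t‖ with hc_def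
  have hc : 0 < c := norm_pos_iff.mpr hxt
  have hπ : 0 < Real.pi := Real.pi_pos
  have hcosh : 0 < Real.cosh ω := Real.cosh_pos ω
  -- Step A : find δ
  have hev : ∀ᶠ ε in nhdsWithin (0:ℝ) (Set.Ioi 0),
      (1 / (2 * ε)) * ∫ τ in (t - ε)..(t + ε), ‖x τ - x t‖ < c/8 :=
    hLeb.eventually_lt_const (by linarith)
  obtain ⟨u, hu, hsub⟩ := mem_nhdsGT_iff_exists_Ioc_subset.mp hev
  set δ : ℝ := min u 1 with hδdef
  have hδ0 : 0 < δ := lt_min hu one_pos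
  have hδ1 : δ ≤ 1 := min_le_right _ _
  have HA : ∀ ε : ℝ, 0 < ε → ε ≤ δ →
      ∫ τ in (t - ε)..(t + ε), ‖x τ - x t‖ ≤ c/4 * ε := by
    intro ε hε hεδ
    have h1 : (1 / (2 * ε)) * ∫ τ in (t - ε)..(t + ε), ‖x τ - x t‖ < c/8 :=
      hsub ⟨hε, hεδ.trans (min_le_left _ _)⟩
    have h2 : ∫ τ in (t - ε)..(t + ε), ‖x τ - x t‖
        = (2*ε) * ((1 / (2 * ε)) * ∫ τ in (t - ε)..(t + ε), ‖x τ - x t‖) := by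
      field_simp
    rw [h2]
    nlinarith
  -- Step B : local integrability
  have hxi : IntegrableOn x (Set.Icc (t-1) (t+1)) := by
    have hCb : ∀ᵐ ξ ∂(volume.restrict (Set.Icc (t-1) (t+1))),
        ‖x ξ‖ ≤ Real.exp (ω * (|t|+1)) * (‖x ξ‖ * Real.exp (-ω * |ξ|)) := by
      refine (ae_restrict_iff' measurableSet_Icc).mpr (Filter.Eventually.of_forall ?_)
      rintro ξ ⟨h1, h2⟩
      have habs : |ξ| ≤ |t| + 1 :=
        abs_le.mpr ⟨by linarith [neg_abs_le t], by linarith [le_abs_self t]⟩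
      have hkey : 1 ≤ Real.exp (ω * (|t|+1)) * Real.exp (-ω * |ξ|) := by
        rw [← Real.exp_add]
        refine Real.one_le_exp ?_
        nlinarith
      calc ‖x ξ‖ = ‖x ξ‖ * 1 := by ring
        _ ≤ ‖x ξ‖ * (Real.exp (ω * (|t|+1)) * Real.exp (-ω * |ξ|)) :=
            mul_le_mul_of_nonneg_left hkey (norm_nonneg _)
        _ = Real.exp (ω * (|t|+1)) * (‖x ξ‖ * Real.exp (-ω * |ξ|)) := by ring
    exact Integrable.mono' (hx.restrict.const_mul _)
      hmx.aestronglyMeasurable.restrict hCb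
  -- Step C : lintegral bound on small symmetric intervals
  have HC : ∀ ε : ℝ, 0 < ε → ε ≤ δ →
      ∫⁻ τ in Set.Icc (t-ε) (t+ε), (‖x τ - x t‖₊ : ℝ≥0∞) ≤ ENNReal.ofReal (c/4 * ε) := by
    intro ε hε hεδ
    have hε1 : ε ≤ 1 := hεδ.trans hδ1
    have hsub2 : Set.Ioc (t-ε) (t+ε) ⊆ Set.Icc (t-1) (t+1) := fun y hy =>
      ⟨by linarith [hy.1], by linarith [hy.2]⟩
    have hint : IntegrableOn (fun τ => x τ - x t) (Set.Ioc (t-ε) (t+ε)) :=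
      (hxi.mono_set hsub2).sub (integrableOn_const measure_Ioc_lt_top.ne)
    have heq : ENNReal.ofReal (∫ τ in Set.Ioc (t-ε) (t+ε), ‖x τ - x t‖)
        = ∫⁻ τ in Set.Ioc (t-ε) (t+ε), (‖x τ - x t‖₊ : ℝ≥0∞) :=
      ofReal_integral_norm_eq_lintegral_enorm hint
    have hIccIoc : ∫⁻ τ in Set.Icc (t-ε) (t+ε), (‖x τ - x t‖₊ : ℝ≥0∞)
        = ∫⁻ τ in Set.Ioc (t-ε) (t+ε), (‖x τ - x t‖₊ : ℝ≥0∞) :=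
      (setLIntegral_congr Ioc_ae_eq_Icc).symm
    rw [hIccIoc, ← heq]
    apply ENNReal.ofReal_le_ofReal
    have h3 : ∫ τ in Set.Ioc (t-ε) (t+ε), ‖x τ - x t‖ = ∫ τ in (t-ε)..(t+ε), ‖x τ - x t‖ :=
      (intervalIntegral.integral_of_le (by linarith)).symm
    rw [h3]
    exact HA ε hε hεδ
  -- the annuli
  set A : ℕ → Set ℝ := fun k => {τ | δ/2^(k+1) < |τ - t| ∧ |τ - t| ≤ δ/2^k} with hA_def
  have hAmeas : ∀ k, MeasurableSet (A k) := fun k =>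
    ((measurable_id.sub_const t).abs) measurableSet_Ioc
  have hAdisj : Pairwise (Function.onFun Disjoint A) := by
    intro k l hkl
    wlog h : k < l generalizing k l
    · exact (this hkl.symm (by omega)).symm
    refine Set.disjoint_left.mpr ?_
    rintro τ ⟨hk1, hk2⟩ ⟨hl1, hl2⟩
    have h2 : δ/2^l ≤ δ/2^(k+1) := by
      gcongr
      · exact one_le_two
      · omega
    linarith
  have hAsub : ∀ k, A k ⊆ Set.Icc (t - δ/2^k) (t + δ/2^k) := by
    rintro k τ ⟨_, h2⟩
    rcases abs_le.mp h2 with ⟨ha, hb⟩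
    exact ⟨by linarith, by linarith⟩
  have hAμ : ∀ k, volume (A k) = ENNReal.ofReal (δ/2^k) := by
    intro k
    have hhalf : δ/2^(k+1) ≤ δ/2^k := by
      gcongr
      · exact one_le_two
      · omega
    have hpos : (0:ℝ) < δ/2^(k+1) := by positivity
    have hAset : A k = Set.Icc (t - δ/2^k) (t + δ/2^k)
        \ Set.Icc (t - δ/2^(k+1)) (t + δ/2^(k+1)) := by
      ext τ
      have e1 : τ ∈ Set.Icc (t - δ/2^k) (t + δ/2^k) ↔ |τ - t| ≤ δ/2^k := by
        rw [Set.mem_Icc, abs_le]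
        constructor <;> rintro ⟨ha, hb⟩ <;> exact ⟨by linarith, by linarith⟩
      have e2 : τ ∈ Set.Icc (t - δ/2^(k+1)) (t + δ/2^(k+1)) ↔ |τ - t| ≤ δ/2^(k+1) := by
        rw [Set.mem_Icc, abs_le]
        constructor <;> rintro ⟨ha, hb⟩ <;> exact ⟨by linarith, by linarith⟩
      simp only [hA_def, Set.mem_setOf_eq, Set.mem_diff, e1, e2, not_le]
      tauto
    rw [hAset, measure_diff (Set.Icc_subset_Icc (by linarith) (by linarith))
      measurableSet_Icc.nullMeasurableSet measure_Icc_lt_top.ne,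
      Real.volume_Icc, Real.volume_Icc,
      ← ENNReal.ofReal_sub _ (by linarith [hpos] :
        (0:ℝ) ≤ t + δ/2^(k+1) - (t - δ/2^(k+1)))]
    congr 1
    rw [pow_succ]
    field_simp
    ring
  -- key lower bound per annulus
  have key : ∀ k : ℕ, ENNReal.ofReal (c/(2*Real.pi*Real.cosh ω))
      ≤ ∫⁻ τ in A k, (‖(Sker ω (t - τ) : ℂ) * x τ‖₊ : ℝ≥0∞) := by
    intro k
    set ε : ℝ := δ/2^k with hε_def
    have hε0 : 0 < ε := by positivity
    have hεδ : ε ≤ δ := div_le_self hδ0.le (one_le_pow₀ one_le_two)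
    have hε1 : ε ≤ 1 := hεδ.trans hδ1
    have hhalf : δ/2^(k+1) = ε/2 := by rw [hε_def, pow_succ]; ring
    set c1 : ℝ := 1/(Real.pi * ε * Real.cosh ω) with hc1
    have hc1pos : 0 < c1 := by positivity
    -- pointwise kernel bound
    have hpt : ∀ τ ∈ A k, c1 * ‖x τ‖ ≤ ‖(Sker ω (t - τ) : ℂ) * x τ‖ := by
      rintro τ ⟨hτ1, hτ2⟩
      rw [hhalf] at hτ1
      have habs0 : 0 < |τ - t| := lt_trans (by positivity) hτ1
      have hsp : 0 < Real.sinh (ω * |τ - t|) := Real.sinh_pos_iff.mpr (by positivity)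
      have hub : Real.sinh (ω * |τ - t|) ≤ ω * ε * Real.cosh ω := by
        have h1 : Real.sinh (ω * |τ - t|) ≤ (ω * |τ - t|) * Real.cosh (ω * |τ - t|) :=
          sinh_le_mul_cosh (by positivity)
        have h2 : Real.cosh (ω * |τ - t|) ≤ Real.cosh ω := by
          rw [Real.cosh_le_cosh]
          rw [abs_of_pos (by positivity : (0:ℝ) < ω * |τ - t|), abs_of_pos hω]
          nlinarith
        have hτ2' : |τ - t| ≤ ε := hτ2
        calc Real.sinh (ω * |τ - t|) ≤ (ω * |τ - t|) * Real.cosh (ω * |τ - t|) := h1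
          _ ≤ (ω * |τ - t|) * Real.cosh ω := mul_le_mul_of_nonneg_left h2 (by positivity)
          _ ≤ ω * ε * Real.cosh ω := by
              nlinarith [mul_le_mul_of_nonneg_right
                (mul_le_mul_of_nonneg_left hτ2' hω.le) hcosh.le]
      have hker : ‖(Sker ω (t - τ) : ℂ)‖ = (ω / Real.pi) * (1 / Real.sinh (ω * |τ - t|)) := by
        rw [Complex.norm_real, Real.norm_eq_abs, Sker, abs_mul,
          abs_of_pos (div_pos hω hπ), abs_div, abs_one, Real.abs_sinh, abs_mul,
          abs_of_pos hω, abs_sub_comm]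
      have h3 : 1/(ω * ε * Real.cosh ω) ≤ 1/Real.sinh (ω * |τ - t|) :=
        one_div_le_one_div_of_le hsp hub
      have h4 : c1 = (ω/Real.pi) * (1/(ω * ε * Real.cosh ω)) := by
        rw [hc1]
        field_simp
      have h5 : c1 ≤ ‖(Sker ω (t - τ) : ℂ)‖ := by
        rw [h4, hker]
        exact mul_le_mul_of_nonneg_left h3 (by positivity)
      calc c1 * ‖x τ‖ ≤ ‖(Sker ω (t - τ) : ℂ)‖ * ‖x τ‖ :=
            mul_le_mul_of_nonneg_right h5 (norm_nonneg _)
        _ = ‖(Sker ω (t - τ) : ℂ) * x τ‖ := (norm_mul _ _).symm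
    -- integral lower bound on ‖x‖ over the annulus
    have hxAk : ENNReal.ofReal (c*ε/2) ≤ ∫⁻ τ in A k, (‖x τ‖₊ : ℝ≥0∞) := by
      have htri : ∫⁻ τ in A k, (ENNReal.ofReal c)
          ≤ (∫⁻ τ in A k, (‖x τ - x t‖₊ : ℝ≥0∞)) + ∫⁻ τ in A k, (‖x τ‖₊ : ℝ≥0∞) := by
        rw [← lintegral_add_left (show Measurable fun τ => (‖x τ - x t‖₊ : ℝ≥0∞) from
          (hmx.sub measurable_const).enorm)]
        apply lintegral_mono
        intro τ
        show ENNReal.ofReal c ≤ (‖x τ - x t‖₊ : ℝ≥0∞) + (‖x τ‖₊ : ℝ≥0∞)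
        rw [← enorm_eq_nnnorm, ← enorm_eq_nnnorm, ← ofReal_norm, ← ofReal_norm,
          ← ENNReal.ofReal_add (norm_nonneg _) (norm_nonneg _)]
        apply ENNReal.ofReal_le_ofReal
        calc c = ‖(x t - x τ) + x τ‖ := by rw [hc_def]; congr 1; ring
          _ ≤ ‖x t - x τ‖ + ‖x τ‖ := norm_add_le _ _
          _ = ‖x τ - x t‖ + ‖x τ‖ := by rw [norm_sub_rev]
      have hconst : ∫⁻ τ in A k, (ENNReal.ofReal c) = ENNReal.ofReal (c * ε) := by
        rw [setLIntegral_const, hAμ k, ← ENNReal.ofReal_mul hc.le]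
      have hmid : ∫⁻ τ in A k, (‖x τ - x t‖₊ : ℝ≥0∞) ≤ ENNReal.ofReal (c/4*ε) :=
        le_trans (lintegral_mono_set (hAsub k)) (HC ε hε0 hεδ)
      have h5 : ENNReal.ofReal (c*ε) ≤ ENNReal.ofReal (c/4*ε) + ∫⁻ τ in A k, (‖x τ‖₊ : ℝ≥0∞) := by
        rw [← hconst]
        exact htri.trans (add_le_add_left hmid _)
      have h6 := tsub_le_iff_left.mpr h5
      rw [← ENNReal.ofReal_sub _ (by positivity)] at h6
      refine le_trans (ENNReal.ofReal_le_ofReal ?_) h6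
      nlinarith
    -- combine
    have hmeasf : Measurable fun τ : ℝ => (‖(Sker ω (t - τ) : ℂ) * x τ‖₊ : ℝ≥0∞) := by
      have m1 : Measurable fun τ : ℝ => Sker ω (t - τ) := by
        apply Measurable.const_mul
        exact ((Real.continuous_sinh.comp
          (continuous_const.mul (continuous_const.sub continuous_id))).measurable).inv.const_mul 1
      exact ((Complex.measurable_ofReal.comp m1).mul hmx).enorm
    calc ENNReal.ofReal (c/(2*Real.pi*Real.cosh ω))
        = ENNReal.ofReal c1 * ENNReal.ofReal (c*ε/2) := by
          rw [← ENNReal.ofReal_mul hc1pos.le]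
          congr 1
          rw [hc1]
          field_simp
      _ ≤ ENNReal.ofReal c1 * ∫⁻ τ in A k, (‖x τ‖₊ : ℝ≥0∞) := by
          exact mul_le_mul_right hxAk _
      _ = ∫⁻ τ in A k, ENNReal.ofReal c1 * (‖x τ‖₊ : ℝ≥0∞) :=
          (lintegral_const_mul _ hmx.enorm).symm
      _ ≤ ∫⁻ τ in A k, (‖(Sker ω (t - τ) : ℂ) * x τ‖₊ : ℝ≥0∞) := by
          refine setLIntegral_mono hmeasf ?_
          intro τ hτ
          rw [← enorm_eq_nnnorm, ← enorm_eq_nnnorm, ← ofReal_norm, ← ofReal_norm,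
            ← ENNReal.ofReal_mul hc1pos.le]
          exact ENNReal.ofReal_le_ofReal (hpt τ hτ)
  -- conclusion
  rw [eq_top_iff]
  calc (⊤:ℝ≥0∞) = ∑' _ : ℕ, ENNReal.ofReal (c/(2*Real.pi*Real.cosh ω)) :=
        (ENNReal.tsum_const_eq_top_of_ne_zero
          ((ENNReal.ofReal_pos.mpr (by positivity)).ne')).symm
    _ ≤ ∑' k : ℕ, ∫⁻ τ in A k, (‖(Sker ω (t - τ) : ℂ) * x τ‖₊ : ℝ≥0∞) :=
        ENNReal.tsum_le_tsum key
    _ = ∫⁻ τ in ⋃ k, A k, (‖(Sker ω (t - τ) : ℂ) * x τ‖₊ : ℝ≥0∞) :=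
        (lintegral_iUnion hAmeas hAdisj _).symm
    _ ≤ ∫⁻ τ : ℝ, (‖(Sker ω (t - τ) : ℂ) * x τ‖₊ : ℝ≥0∞) :=
        setLIntegral_le_lintegral _ _
end

section
/- Let ω > 0. For every λ ∈ ℝ, ∫_ℝ (ω/π) · (1/cosh(ωt)) · e^{itλ} dt = 1/cosh(πλ/(2ω)). -/
open MeasureTheory Filter Set

private lemma sech_key (ω l : ℝ) (hω : 0 < ω) (x : ℝ) (hx : x ∈ Set.Ioo (0:ℝ) 1) :
    |1 / (2*ω*(x*(1-x)))| •
      (((ω / Real.pi) * (1 / Real.cosh (ω * (Real.log (x/(1-x)) / (2*ω)))) : ℂ) *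
        Complex.exp (Complex.I * ((Real.log (x/(1-x)) / (2*ω) : ℝ) : ℂ) * l))
    = (1/(Real.pi:ℂ)) * ((x:ℂ) ^ ((1/2 + (l/(2*ω)) * Complex.I) - 1) *
        ((1:ℂ)-(x:ℂ)) ^ ((1/2 - (l/(2*ω)) * Complex.I) - 1)) := by
  obtain ⟨hx0, hx1⟩ := hx
  have h1x : (0:ℝ) < 1 - x := by linarith
  have hπ : (0:ℝ) < Real.pi := Real.pi_pos
  set a := Real.log x with ha
  set b := Real.log (1-x) with hb
  have hea : Real.exp a = x := Real.exp_log hx0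
  have heb : Real.exp b = 1 - x := Real.exp_log h1x
  have hll : Real.log (x/(1-x)) = a - b := Real.log_div hx0.ne' h1x.ne'
  have hωt : ω * (Real.log (x/(1-x)) / (2*ω)) = (a - b)/2 := by
    rw [hll]; field_simp
  set E := Real.exp ((a+b)/2) with hE
  have hEpos : 0 < E := Real.exp_pos _
  have hE2 : E * E = x * (1-x) := by
    rw [hE, ← Real.exp_add, ← heb, ← hea, ← Real.exp_add]
    congr 1; ring
  have hcosh : Real.cosh (ω * (Real.log (x/(1-x)) / (2*ω))) = 1 / (2*E) := by
    rw [hωt, Real.cosh_eq]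
    have h1 : Real.exp ((a-b)/2) = E / (1-x) := by
      rw [hE, ← heb, ← Real.exp_sub]; congr 1; ring
    have h2 : Real.exp (-((a-b)/2)) = E / x := by
      rw [hE, ← hea, ← Real.exp_sub]; congr 1; ring
    rw [h1, h2]
    field_simp
    nlinarith [hE2]
  have hphase : Complex.I * ((Real.log (x/(1-x)) / (2*ω) : ℝ) : ℂ) * (l:ℂ)
      = (((l/(2*ω))*(a-b) : ℝ) : ℂ) * Complex.I := by
    push_cast [hll]; ring
  have hxne : (x:ℂ) ≠ 0 := by exact_mod_cast hx0.ne'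
  have h1xne : (1:ℂ) - (x:ℂ) ≠ 0 := by
    intro h
    have : ((1-x : ℝ):ℂ) = 0 := by push_cast; linear_combination h
    exact h1x.ne' (by exact_mod_cast this)
  have hlogx : Complex.log (x:ℂ) = (a:ℂ) := by rw [ha, Complex.ofReal_log hx0.le]
  have hlog1x : Complex.log ((1:ℂ)-(x:ℂ)) = (b:ℂ) := by
    rw [hb, Complex.ofReal_log h1x.le]; norm_cast
  rw [Complex.cpow_def_of_ne_zero hxne, Complex.cpow_def_of_ne_zero h1xne, hlogx, hlog1x,
    hcosh, Complex.real_smul]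
  have hR : Complex.exp ((a:ℂ) * ((1/2 + (l/(2*ω)) * Complex.I) - 1)) *
        Complex.exp ((b:ℂ) * ((1/2 - (l/(2*ω)) * Complex.I) - 1))
      = ((Real.exp (-((a+b)/2)) : ℝ):ℂ) *
          Complex.exp ((((l/(2*ω))*(a-b) : ℝ) : ℂ) * Complex.I) := by
    rw [← Complex.exp_add, Complex.ofReal_exp, ← Complex.exp_add]
    congr 1; push_cast; ring
  rw [hR]
  have hsc : (1/(2*ω*(x*(1-x)))) * (ω/Real.pi * (1/(1/(2*E)))) =
      1/Real.pi * Real.exp (-((a+b)/2)) := by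
    have hEneg : Real.exp (-((a+b)/2)) = E⁻¹ := by rw [Real.exp_neg]
    rw [hEneg, ← hE2]
    field_simp
  have habs : |1 / (2*ω*(x*(1-x)))| = 1 / (2*ω*(x*(1-x))) := by
    rw [abs_of_pos]; positivity
  rw [habs]
  have hscC := congrArg (fun r : ℝ => (r : ℂ)) hsc
  push_cast at hscC
  rw [hphase]
  push_cast
  linear_combination Complex.exp (((l:ℂ)/(2*ω)*((a:ℂ)-(b:ℂ))) * Complex.I) * hscC

/-- For `ω > 0` and every real `λ`,
`∫ (ω/π)(1/cosh(ωt)) e^{itλ} dt = 1/cosh(πλ/(2ω))`. -/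
theorem stmt4 (ω : ℝ) (hω : 0 < ω) (l : ℝ) :
    ∫ t : ℝ, ((ω / Real.pi) * (1 / Real.cosh (ω * t)) : ℂ) *
        Complex.exp (Complex.I * t * l)
      = ((1 / Real.cosh (Real.pi * l / (2 * ω)) : ℝ) : ℂ) := by
  have h2ω : (2*ω) ≠ 0 := by positivity
  set ψ : ℝ → ℝ := fun x => Real.log (x / (1-x)) / (2*ω) with hψ
  set ψ' : ℝ → ℝ := fun x => 1 / (2*ω*(x*(1-x))) with hψ'
  have hderiv : ∀ x ∈ Ioo (0:ℝ) 1, HasDerivWithinAt ψ (ψ' x) (Ioo 0 1) x := by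
    intro x hx
    obtain ⟨hx0, hx1⟩ := hx
    have h1x : (0:ℝ) < 1 - x := by linarith
    have h1 : HasDerivAt (fun y : ℝ => y / (1-y)) (1/(1-x)^2) x := by
      have := (hasDerivAt_id x).div ((hasDerivAt_id x).const_sub 1) h1x.ne'
      refine this.congr_deriv ?_
      simp only [id]
      ring
    have h2 : HasDerivAt (fun y : ℝ => Real.log (y/(1-y)))
        ((1/(1-x)^2) / (x/(1-x))) x := h1.log (by positivity)
    have h3 := h2.div_const (2*ω)
    have : (1/(1-x)^2) / (x/(1-x)) / (2*ω) = ψ' x := by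
      rw [hψ']; field_simp
    rw [this] at h3
    exact h3.hasDerivWithinAt
  have hinj : InjOn ψ (Ioo (0:ℝ) 1) := by
    intro x hx y hy hxy
    obtain ⟨hx0, hx1⟩ := hx; obtain ⟨hy0, hy1⟩ := hy
    have h1x : (0:ℝ) < 1 - x := by linarith
    have h1y : (0:ℝ) < 1 - y := by linarith
    have hlog : Real.log (x/(1-x)) = Real.log (y/(1-y)) := by
      have := congrArg (fun r => r * (2*ω)) hxy
      simpa [hψ, div_mul_cancel₀, h2ω] using this
    have hq : x/(1-x) = y/(1-y) :=
      Real.log_injOn_pos (show x/(1-x) ∈ Ioi 0 from mem_Ioi.mpr (by positivity))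
        (show y/(1-y) ∈ Ioi 0 from mem_Ioi.mpr (by positivity)) ?_
    · field_simp at hq
      nlinarith [hq]
    · exact hlog
  have himg : ψ '' (Ioo (0:ℝ) 1) = univ := by
    apply eq_univ_of_forall
    intro t
    refine ⟨1/(1 + Real.exp (-(2*ω*t))), ?_, ?_⟩
    · constructor
      · positivity
      · have h := Real.exp_pos (-(2*ω*t))
        rw [div_lt_one (by positivity)]
        linarith
    · have hE := Real.exp_pos (-(2*ω*t))
      have h1 : (1:ℝ) - 1/(1 + Real.exp (-(2*ω*t)))
          = Real.exp (-(2*ω*t)) / (1 + Real.exp (-(2*ω*t))) := by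
        field_simp
        ring
      rw [hψ]
      simp only []
      rw [h1]
      have h2 : 1/(1 + Real.exp (-(2*ω*t))) / (Real.exp (-(2*ω*t)) / (1 + Real.exp (-(2*ω*t))))
          = Real.exp (2*ω*t) := by
        rw [Real.exp_neg] at *
        field_simp
      rw [h2, Real.log_exp]
      field_simp
  have hchv := MeasureTheory.integral_image_eq_integral_abs_deriv_smul measurableSet_Ioo
    hderiv hinj
    (fun t => ((ω / Real.pi) * (1 / Real.cosh (ω * t)) : ℂ) * Complex.exp (Complex.I * t * l))
  rw [himg, MeasureTheory.setIntegral_univ] at hchv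
  rw [hchv]
  have hcong : ∫ x in Ioo (0:ℝ) 1, |ψ' x| •
        (((ω / Real.pi) * (1 / Real.cosh (ω * ψ x)) : ℂ) * Complex.exp (Complex.I * (ψ x) * l))
      = ∫ x in Ioo (0:ℝ) 1, (1/(Real.pi:ℂ)) * ((x:ℂ) ^ ((1/2 + (l/(2*ω)) * Complex.I) - 1) *
          ((1:ℂ)-(x:ℂ)) ^ ((1/2 - (l/(2*ω)) * Complex.I) - 1)) := by
    apply MeasureTheory.setIntegral_congr_fun measurableSet_Ioo
    intro x hx
    exact sech_key ω l hω x hx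
  rw [hcong, MeasureTheory.integral_const_mul]
  have hbetaIoo : Complex.betaIntegral (1/2 + ((l:ℂ)/(2*(ω:ℂ))) * Complex.I)
        (1/2 - ((l:ℂ)/(2*(ω:ℂ))) * Complex.I)
      = ∫ x in Ioo (0:ℝ) 1, (x:ℂ) ^ ((1/2 + (l/(2*ω)) * Complex.I) - 1) *
          ((1:ℂ)-(x:ℂ)) ^ ((1/2 - (l/(2*ω)) * Complex.I) - 1) := by
    rw [Complex.betaIntegral, intervalIntegral.integral_of_le zero_le_one,
      MeasureTheory.integral_Ioc_eq_integral_Ioo]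
  rw [← hbetaIoo]
  -- final evaluation via Gamma reflection
  have hπ : (0:ℝ) < Real.pi := Real.pi_pos
  set c : ℝ := l / (2*ω) with hc
  have hcC : (l:ℂ)/(2*(ω:ℂ)) = (c:ℂ) := by rw [hc]; push_cast; ring
  rw [hcC]
  set u : ℂ := 1/2 + (c:ℂ) * Complex.I with hu
  set v : ℂ := 1/2 - (c:ℂ) * Complex.I with hv
  have hure : 0 < u.re := by simp [hu]
  have hvre : 0 < v.re := by simp [hv]
  have huv : u + v = 1 := by rw [hu, hv]; ring
  have hbeta : Complex.betaIntegral u v = Complex.Gamma u * Complex.Gamma v := by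
    have h := Complex.Gamma_mul_Gamma_eq_betaIntegral hure hvre
    rw [huv, Complex.Gamma_one, one_mul] at h
    exact h.symm
  have hv1u : v = 1 - u := by rw [hu, hv]; ring
  rw [hbeta, hv1u, Complex.Gamma_mul_Gamma_one_sub]
  have hsin : Complex.sin ((Real.pi : ℂ) * u) = ((Real.cosh (Real.pi * l / (2*ω)) : ℝ) : ℂ) := by
    have h1 : (Real.pi : ℂ) * u = ((Real.pi * c : ℝ) : ℂ) * Complex.I + (Real.pi : ℂ)/2 := by
      rw [hu]; push_cast; ring
    rw [h1, Complex.sin_add_pi_div_two, Complex.cos_mul_I, ← Complex.ofReal_cosh]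
    congr 1
    rw [hc]; field_simp
  rw [hsin]
  have hcosh : (0:ℝ) < Real.cosh (Real.pi * l / (2*ω)) := Real.cosh_pos _
  have hπC : (Real.pi : ℂ) ≠ 0 := by exact_mod_cast hπ.ne'
  have hcoshC : ((Real.cosh (Real.pi * l / (2*ω)) : ℝ) : ℂ) ≠ 0 := by exact_mod_cast hcosh.ne'
  push_cast
  field_simp
end

section
/- Let ω > 0 and 0 ≤ σ < ω. Let f : ℝ → ℂ be measurable with ∫_ℝ |f(τ)|² e^{−2σ|τ|} dτ < ∞, and define g(t) = ∫_ℝ C_ω(t − τ) f(τ) dτ. Then ∫_ℝ |g(t)|² e^{−2σ|t|} dt < ∞ and ‖g‖_{L²_σ} ≤ (2/(1 − σ/ω)) · ‖f‖_{L²_σ}. -/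
open MeasureTheory Filter Set
open scoped Convolution

/-- The kernel `C_ω(ξ) = (ω/π) · (1/cosh(ωξ))`. -/
noncomputable def Cker (ω ξ : ℝ) : ℝ := (ω / Real.pi) * (1 / Real.cosh (ω * ξ))

lemma my_int_exp_abs {c : ℝ} (hc : 0 < c) :
    Integrable (fun x : ℝ => Real.exp (-(c * |x|))) := by
  have hIoi : IntegrableOn (fun x : ℝ => Real.exp (-(c * |x|))) (Ioi 0) := by
    refine (exp_neg_integrableOn_Ioi 0 hc).congr_fun (fun x hx => ?_) measurableSet_Ioi
    rw [abs_of_pos hx]; ring_nf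
  have hIic : IntegrableOn (fun x : ℝ => Real.exp (-(c * |x|))) (Iic 0) := by
    rw [← Measure.map_neg_eq_self (volume : Measure ℝ)]
    have m : MeasurableEmbedding fun x : ℝ => -x := (Homeomorph.neg ℝ).measurableEmbedding
    rw [m.integrableOn_map_iff]
    simp_rw [Function.comp_def, abs_neg, neg_preimage, neg_Iic, neg_zero]
    exact Iff.mpr integrableOn_Ici_iff_integrableOn_Ioi hIoi
  have h := hIic.union hIoi
  rwa [Iic_union_Ioi, integrableOn_univ] at h

lemma my_integral_exp_abs {c : ℝ} (hc : 0 < c) :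
    ∫ x : ℝ, Real.exp (-(c * |x|)) = 2 / c := by
  rw [integral_comp_abs (f := fun y => Real.exp (-(c * y)))]
  have h := integral_comp_mul_left_Ioi (fun y => Real.exp (-y)) 0 hc
  simp only [mul_zero, integral_exp_neg_Ioi_zero, smul_eq_mul, mul_one, neg_mul] at h ⊢
  rw [h]; field_simp

lemma Cker_nonneg {ω : ℝ} (hω : 0 < ω) (ξ : ℝ) : 0 ≤ Cker ω ξ := by
  unfold Cker
  have := Real.cosh_pos (ω * ξ)
  positivity

lemma exp_abs_le_two_cosh (x : ℝ) : Real.exp |x| ≤ 2 * Real.cosh x := by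
  rw [Real.cosh_eq]
  rcases abs_cases x with ⟨h, _⟩ | ⟨h, _⟩ <;> rw [h] <;>
    nlinarith [Real.exp_pos x, Real.exp_pos (-x)]

lemma Cker_le {ω : ℝ} (hω : 0 < ω) (ξ : ℝ) :
    Cker ω ξ ≤ (2 * (ω / Real.pi)) * Real.exp (-(ω * |ξ|)) := by
  unfold Cker
  have h1 : Real.exp (ω * |ξ|) ≤ 2 * Real.cosh (ω * ξ) := by
    have := exp_abs_le_two_cosh (ω * ξ)
    rwa [abs_mul, abs_of_pos hω] at this
  have hcosh : 0 < Real.cosh (ω * ξ) := Real.cosh_pos _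
  have h2 : 1 / Real.cosh (ω * ξ) ≤ 2 * Real.exp (-(ω * |ξ|)) := by
    rw [Real.exp_neg, div_le_iff₀ hcosh]
    rw [mul_comm, ← mul_assoc]
    have := Real.exp_pos (ω * |ξ|)
    calc (1:ℝ) = Real.exp (ω * |ξ|) * (Real.exp (ω * |ξ|))⁻¹ := by field_simp
    _ ≤ 2 * Real.cosh (ω * ξ) * (Real.exp (ω * |ξ|))⁻¹ := by gcongr
    _ = Real.cosh (ω * ξ) * 2 * (Real.exp (ω * |ξ|))⁻¹ := by ring
  calc (ω / Real.pi) * (1 / Real.cosh (ω * ξ))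
      ≤ (ω / Real.pi) * (2 * Real.exp (-(ω * |ξ|))) := by
        apply mul_le_mul_of_nonneg_left h2; positivity
    _ = (2 * (ω / Real.pi)) * Real.exp (-(ω * |ξ|)) := by ring

/-- Let `ω > 0`, `0 ≤ σ < ω`, and let `f ∈ L²_σ`, i.e. `f` measurable with
`∫ |f(τ)|² e^{-2σ|τ|} dτ < ∞`. With `g(t) = ∫ C_ω(t-τ) f(τ) dτ` one has `g ∈ L²_σ` and
`‖g‖_{L²_σ} ≤ (2/(1-σ/ω)) ‖f‖_{L²_σ}`. -/
theorem stmt16 (ω σ : ℝ) (hω : 0 < ω) (hσ0 : 0 ≤ σ) (hσω : σ < ω)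
    (f : ℝ → ℂ) (hmf : Measurable f)
    (hf : Integrable (fun τ : ℝ => ‖f τ‖ ^ 2 * Real.exp (-2 * σ * |τ|)))
    (g : ℝ → ℂ) (hg : g = fun t : ℝ => ∫ τ : ℝ, (Cker ω (t - τ) : ℂ) * f τ) :
    Integrable (fun t : ℝ => ‖g t‖ ^ 2 * Real.exp (-2 * σ * |t|)) ∧
      Real.sqrt (∫ t : ℝ, ‖g t‖ ^ 2 * Real.exp (-2 * σ * |t|))
        ≤ (2 / (1 - σ / ω)) * Real.sqrt (∫ τ : ℝ, ‖f τ‖ ^ 2 * Real.exp (-2 * σ * |τ|)) := by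
  have hπ : 0 < Real.pi := Real.pi_pos
  have haσ : 0 < ω - σ := by linarith
  set c0 : ℝ := 2 * (ω / Real.pi) with hc0def
  have hc0 : 0 < c0 := by positivity
  set K : ℝ → ℝ := fun ξ => c0 * Real.exp (-((ω - σ) * |ξ|)) with hKdef
  have hK_nonneg : ∀ ξ, 0 ≤ K ξ := fun ξ => by positivity
  have hK_cont : Continuous K := by fun_prop
  have hK_meas : Measurable K := hK_cont.measurable
  have hK_int : Integrable K := (my_int_exp_abs haσ).const_mul c0
  have hK_bdd : ∀ ξ, K ξ ≤ c0 := by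
    intro ξ
    have : Real.exp (-((ω - σ) * |ξ|)) ≤ 1 := by
      apply Real.exp_le_one_iff.mpr; simp; positivity
    calc K ξ ≤ c0 * 1 := by apply mul_le_mul_of_nonneg_left this hc0.le
    _ = c0 := mul_one c0
  set A : ℝ := c0 * (2 / (ω - σ)) with hAdef
  have hA_pos : 0 < A := by positivity
  have hK_val : ∫ ξ, K ξ = A := by
    rw [integral_const_mul, my_integral_exp_abs haσ]
  have hA_le : A ≤ 2 / (1 - σ / ω) := by
    have h1 : 1 - σ / ω = (ω - σ) / ω := by field_simp
    have h3 : (2:ℝ) ≤ Real.pi := by nlinarith [Real.pi_gt_three]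
    have hA_eq : A = (4 * ω / Real.pi) / (ω - σ) := by
      rw [hAdef, hc0def]; field_simp; ring
    rw [h1, div_div_eq_mul_div, hA_eq]
    gcongr
    rw [div_le_iff₀ hπ]
    nlinarith
  -- the weighted function F
  set F : ℝ → ℝ := fun τ => ‖f τ‖ * Real.exp (-(σ * |τ|)) with hFdef
  have hF_meas : Measurable F := by fun_prop
  have hF_nonneg : ∀ τ, 0 ≤ F τ := fun τ => by positivity
  have hF2_eq : ∀ τ, F τ ^ 2 = ‖f τ‖ ^ 2 * Real.exp (-2 * σ * |τ|) := by
    intro τ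
    rw [hFdef]
    simp only [mul_pow, sq (Real.exp _), ← Real.exp_add]
    ring_nf
  have hF2_int : Integrable (fun τ => F τ ^ 2) := by
    apply hf.congr
    filter_upwards with τ using (hF2_eq τ).symm
  have hF_mem : MemLp F 2 (volume : Measure ℝ) :=
    (memLp_two_iff_integrable_sq hF_meas.aestronglyMeasurable).2 hF2_int
  set If : ℝ := ∫ τ : ℝ, ‖f τ‖ ^ 2 * Real.exp (-2 * σ * |τ|) with hIfdef
  have hIf_nonneg : 0 ≤ If :=
    integral_nonneg fun τ => by positivity
  have hF2_val : ∫ τ, F τ ^ 2 = If := by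
    rw [hIfdef]; exact integral_congr_ae (Filter.Eventually.of_forall hF2_eq)
  -- kernel key bound
  have hkey : ∀ t τ : ℝ, Cker ω (t - τ) * Real.exp (-(σ * |t|)) ≤ K (t - τ) * Real.exp (-(σ * |τ|)) := by
    intro t τ
    have habs : |τ| - |t| ≤ |t - τ| := by
      have h := abs_sub_abs_le_abs_sub τ t
      rwa [abs_sub_comm] at h
    calc Cker ω (t - τ) * Real.exp (-(σ * |t|))
        ≤ (c0 * Real.exp (-(ω * |t - τ|))) * Real.exp (-(σ * |t|)) := by
          apply mul_le_mul_of_nonneg_right (Cker_le hω _) (Real.exp_pos _).le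
      _ = c0 * Real.exp (-(ω * |t - τ|) + -(σ * |t|)) := by
          rw [mul_assoc, ← Real.exp_add]
      _ ≤ c0 * Real.exp (-((ω - σ) * |t - τ|) + -(σ * |τ|)) := by
          apply mul_le_mul_of_nonneg_left _ hc0.le
          apply Real.exp_le_exp.2
          nlinarith [abs_nonneg (t - τ)]
      _ = K (t - τ) * Real.exp (-(σ * |τ|)) := by
          rw [hKdef]; simp only [mul_assoc, Real.exp_add]
  -- measure preserving shift
  have hmp : ∀ t : ℝ, MeasurePreserving (fun τ : ℝ => t - τ) volume volume :=
    fun t => Measure.measurePreserving_sub_left volume t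
  have hKt_int : ∀ t : ℝ, Integrable (fun τ => K (t - τ)) := by
    intro t
    exact (memLp_one_iff_integrable.1
      ((memLp_one_iff_integrable.2 hK_int).comp_measurePreserving (hmp t)))
  have hKt_val : ∀ t : ℝ, ∫ τ, K (t - τ) = A := by
    intro t
    rw [integral_sub_left_eq_self K volume t, hK_val]
  have hKt_mem : ∀ t : ℝ, MemLp (fun τ => K (t - τ)) 2 (volume : Measure ℝ) := by
    intro t
    have hKmem : MemLp K 2 (volume : Measure ℝ) := by
      rw [memLp_two_iff_integrable_sq hK_meas.aestronglyMeasurable]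
      have : Integrable (fun ξ : ℝ => c0 ^ 2 * Real.exp (-((2 * (ω - σ)) * |ξ|))) :=
        ((my_int_exp_abs (by linarith)).const_mul _)
      apply this.congr
      filter_upwards with ξ
      rw [hKdef]
      simp only [mul_pow, sq (Real.exp _), ← Real.exp_add]
      ring_nf
    exact hKmem.comp_measurePreserving (hmp t)
  have hKtF_int : ∀ t : ℝ, Integrable (fun τ => K (t - τ) * F τ) := by
    intro t
    have := ((hF_mem).smul (φ := fun τ => K (t - τ)) (hKt_mem t)
      (p := 2) (q := 2) (r := 1))
    rw [memLp_one_iff_integrable] at this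
    exact this.congr (by filter_upwards with τ; rfl)
  have hKtF2_int : ∀ t : ℝ, Integrable (fun τ => K (t - τ) * F τ ^ 2) := by
    intro t
    exact hF2_int.bdd_mul ((hK_meas.comp (by fun_prop)).aestronglyMeasurable)
      (Filter.Eventually.of_forall fun τ => by rw [Real.norm_of_nonneg (hK_nonneg _)]; exact hK_bdd _)
  -- step 1 : pointwise bound on g
  have hgb : ∀ t : ℝ, ‖g t‖ * Real.exp (-(σ * |t|)) ≤ ∫ τ, K (t - τ) * F τ := by
    intro t
    have h1 : ‖g t‖ ≤ ∫ τ, Cker ω (t - τ) * ‖f τ‖ := by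
      rw [hg]
      refine (norm_integral_le_integral_norm _).trans_eq ?_
      apply integral_congr_ae
      filter_upwards with τ
      rw [norm_mul, Complex.norm_real, Real.norm_eq_abs, abs_of_nonneg (Cker_nonneg hω _)]
    calc ‖g t‖ * Real.exp (-(σ * |t|))
        ≤ (∫ τ, Cker ω (t - τ) * ‖f τ‖) * Real.exp (-(σ * |t|)) := by
          apply mul_le_mul_of_nonneg_right h1 (Real.exp_pos _).le
      _ = ∫ τ, Cker ω (t - τ) * ‖f τ‖ * Real.exp (-(σ * |t|)) := (integral_mul_const _ _).symm
      _ ≤ ∫ τ, K (t - τ) * F τ := by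
          apply integral_mono_of_nonneg
          · filter_upwards with τ
            have := Cker_nonneg hω (t - τ)
            positivity
          · exact hKtF_int t
          · filter_upwards with τ
            have h2 := hkey t τ
            calc Cker ω (t - τ) * ‖f τ‖ * Real.exp (-(σ * |t|))
                = (Cker ω (t - τ) * Real.exp (-(σ * |t|))) * ‖f τ‖ := by ring
              _ ≤ (K (t - τ) * Real.exp (-(σ * |τ|))) * ‖f τ‖ := by
                  apply mul_le_mul_of_nonneg_right h2 (norm_nonneg _)
              _ = K (t - τ) * F τ := by rw [hFdef]; ring
  -- step 2 : Cauchy–Schwarz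
  have hCS : ∀ t : ℝ, (∫ τ, K (t - τ) * F τ) ^ 2 ≤ A * ∫ τ, K (t - τ) * F τ ^ 2 := by
    intro t
    set u : ℝ → ℝ := fun τ => Real.sqrt (K (t - τ)) with hudef
    set v : ℝ → ℝ := fun τ => Real.sqrt (K (t - τ)) * F τ with hvdef
    have hu_meas : Measurable u :=
      (hK_meas.comp (measurable_const.sub measurable_id)).sqrt
    have hv_meas : Measurable v := hu_meas.mul hF_meas
    have hu_sq : ∀ τ, u τ ^ 2 = K (t - τ) := fun τ => Real.sq_sqrt (hK_nonneg _)
    have hv_sq : ∀ τ, v τ ^ 2 = K (t - τ) * F τ ^ 2 := by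
      intro τ; rw [hvdef]; simp only
      rw [mul_pow, Real.sq_sqrt (hK_nonneg _)]
    have hofReal2 : ENNReal.ofReal (2:ℝ) = 2 := by
      rw [ENNReal.ofReal_ofNat]
    have hu_mem : MemLp u (ENNReal.ofReal 2) volume := by
      rw [hofReal2]
      exact (memLp_two_iff_integrable_sq hu_meas.aestronglyMeasurable).2
        ((hKt_int t).congr (by filter_upwards with τ using (hu_sq τ).symm))
    have hv_mem : MemLp v (ENNReal.ofReal 2) volume := by
      rw [hofReal2]
      exact (memLp_two_iff_integrable_sq hv_meas.aestronglyMeasurable).2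
        ((hKtF2_int t).congr (by filter_upwards with τ using (hv_sq τ).symm))
    have hpq : Real.HolderConjugate 2 2 := Real.HolderConjugate.two_two
    have H := MeasureTheory.integral_mul_le_Lp_mul_Lq_of_nonneg hpq
      (Filter.Eventually.of_forall fun τ => Real.sqrt_nonneg _)
      (Filter.Eventually.of_forall fun τ => mul_nonneg (Real.sqrt_nonneg _) (hF_nonneg τ))
      hu_mem hv_mem
    have huv : ∀ τ, u τ * v τ = K (t - τ) * F τ := by
      intro τ
      rw [hudef, hvdef]; simp only
      rw [← mul_assoc, Real.mul_self_sqrt (hK_nonneg _)]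
    have hrpow2 : ∀ x : ℝ, x ^ (2:ℝ) = x ^ 2 := fun x => by
      rw [show (2:ℝ) = ((2:ℕ):ℝ) by norm_num, Real.rpow_natCast]
    have e1 : ∫ τ, u τ * v τ = ∫ τ, K (t - τ) * F τ :=
      integral_congr_ae (Filter.Eventually.of_forall huv)
    have e2 : ∫ τ, u τ ^ (2:ℝ) = A := by
      rw [← hKt_val t]
      apply integral_congr_ae
      filter_upwards with τ
      rw [hrpow2, hu_sq τ]
    have e3 : ∫ τ, v τ ^ (2:ℝ) = ∫ τ, K (t - τ) * F τ ^ 2 := by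
      apply integral_congr_ae
      filter_upwards with τ
      rw [hrpow2, hv_sq τ]
    rw [e1, e2, e3] at H
    set B : ℝ := ∫ τ, K (t - τ) * F τ ^ 2 with hBdef
    have hB_nonneg : 0 ≤ B :=
      integral_nonneg fun τ => mul_nonneg (hK_nonneg _) (sq_nonneg _)
    have hRHS : (A ^ ((1:ℝ)/2) * B ^ ((1:ℝ)/2)) ^ 2 = A * B := by
      rw [mul_pow, ← Real.rpow_natCast (A ^ ((1:ℝ)/2)) 2, ← Real.rpow_natCast (B ^ ((1:ℝ)/2)) 2,
        ← Real.rpow_mul hA_pos.le, ← Real.rpow_mul hB_nonneg]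
      norm_num
    calc (∫ τ, K (t - τ) * F τ) ^ 2 ≤ (A ^ ((1:ℝ)/2) * B ^ ((1:ℝ)/2)) ^ 2 := by
          apply pow_le_pow_left₀
            (integral_nonneg fun τ => mul_nonneg (hK_nonneg _) (hF_nonneg _)) H
      _ = A * B := hRHS
  -- step 3 : convolution
  set conv : ℝ → ℝ := (fun τ => F τ ^ 2) ⋆[ContinuousLinearMap.mul ℝ ℝ, volume] K with hconvdef
  have hconv_eq : ∀ t : ℝ, conv t = ∫ τ, K (t - τ) * F τ ^ 2 := by
    intro t
    rw [hconvdef, convolution_def]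
    apply integral_congr_ae
    filter_upwards with τ
    simp only [ContinuousLinearMap.mul_apply']
    ring
  have hconv_int : Integrable conv :=
    Integrable.integrable_convolution (L := ContinuousLinearMap.mul ℝ ℝ) hF2_int hK_int
  have hconv_val : ∫ t, conv t = If * A := by
    rw [hconvdef, integral_convolution (L := ContinuousLinearMap.mul ℝ ℝ) hF2_int hK_int]
    simp only [ContinuousLinearMap.mul_apply']
    rw [hF2_val, hK_val]
  set G : ℝ → ℝ := fun t => A * conv t with hGdef
  have hG_int : Integrable G := hconv_int.const_mul A
  have hG_val : ∫ t, G t = A ^ 2 * If := by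
    rw [hGdef, integral_const_mul, hconv_val]; ring
  -- domination
  have hdom : ∀ t : ℝ, ‖g t‖ ^ 2 * Real.exp (-2 * σ * |t|) ≤ G t := by
    intro t
    have h0 : ‖g t‖ ^ 2 * Real.exp (-2 * σ * |t|) = (‖g t‖ * Real.exp (-(σ * |t|))) ^ 2 := by
      simp only [mul_pow, sq (Real.exp _), ← Real.exp_add]
      ring_nf
    have hGt : G t = A * conv t := rfl
    rw [h0, hGt, hconv_eq t]
    calc (‖g t‖ * Real.exp (-(σ * |t|))) ^ 2 ≤ (∫ τ, K (t - τ) * F τ) ^ 2 := by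
          apply pow_le_pow_left₀ (by positivity) (hgb t)
      _ ≤ A * ∫ τ, K (t - τ) * F τ ^ 2 := hCS t
  -- measurability of g
  have hg_meas : AEStronglyMeasurable g (volume : Measure ℝ) := by
    rw [hg]
    apply StronglyMeasurable.aestronglyMeasurable
    apply MeasureTheory.StronglyMeasurable.integral_prod_right'
      (f := fun p : ℝ × ℝ => (Cker ω (p.1 - p.2) : ℂ) * f p.2)
    apply Measurable.stronglyMeasurable
    have hCc : Continuous (Cker ω) := by
      unfold Cker
      exact continuous_const.mul (continuous_const.div
        (Real.continuous_cosh.comp (continuous_const.mul continuous_id))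
        (fun x => (Real.cosh_pos _).ne'))
    fun_prop
  have htarget_meas : AEStronglyMeasurable
      (fun t : ℝ => ‖g t‖ ^ 2 * Real.exp (-2 * σ * |t|)) (volume : Measure ℝ) := by
    apply AEStronglyMeasurable.mul
    · exact (hg_meas.norm.aemeasurable.pow_const 2).aestronglyMeasurable
    · exact (Continuous.aestronglyMeasurable (by fun_prop))
  have htarget_int : Integrable (fun t : ℝ => ‖g t‖ ^ 2 * Real.exp (-2 * σ * |t|)) := by
    apply Integrable.mono' hG_int htarget_meas
    filter_upwards with t
    rw [Real.norm_of_nonneg (by positivity)]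
    exact hdom t
  refine ⟨htarget_int, ?_⟩
  have hle : (∫ t : ℝ, ‖g t‖ ^ 2 * Real.exp (-2 * σ * |t|)) ≤ A ^ 2 * If := by
    rw [← hG_val]
    exact integral_mono htarget_int hG_int hdom
  calc Real.sqrt (∫ t : ℝ, ‖g t‖ ^ 2 * Real.exp (-2 * σ * |t|))
      ≤ Real.sqrt (A ^ 2 * If) := Real.sqrt_le_sqrt hle
    _ = A * Real.sqrt If := by
        rw [Real.sqrt_mul (by positivity), Real.sqrt_sq hA_pos.le]
    _ ≤ (2 / (1 - σ / ω)) * Real.sqrt If := by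
        apply mul_le_mul_of_nonneg_right hA_le (Real.sqrt_nonneg _)
end
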